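/- Let n ≥ 1, let f : [0,1] → ℝ be continuously differentiable, and let x ∈ [0,1]. Then the derivative of the polynomial x ↦ D_n(f;x) satisfies |(D_n f)′(x)| ≤ (n/(n+2))·‖f′‖_∞ ≤ ‖f′‖_∞. -/

import Mathlib

open scoped BigOperators
open Set Filter MeasureTheory

/-- Bernstein fundamental function `p_{n,k}` (vanishes for `k > n` since `choose = 0`). -/
noncomputable def bp (n k : ℕ) (x : ℝ) : ℝ :=
  (n.choose k : ℝ) * x ^ k * (1 - x) ^ (n - k)

/-- Bernstein fundamental function with integer index, vanishing for negative `k`. -/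
noncomputable def bpz (n : ℕ) (k : ℤ) (x : ℝ) : ℝ :=
  if 0 ≤ k then bp n k.toNat x else 0

/-- The classical Bernstein operator `B_n`. -/
noncomputable def Bern (n : ℕ) (f : ℝ → ℝ) (x : ℝ) : ℝ :=
  ∑ k ∈ Finset.range (n + 1), bp n k x * f (k / n)

/-- Modified fundamental function `p_{n,k}^{M,1}` with `a(x,n) = a1*x + a0`. -/
noncomputable def bpM1 (a0 a1 : ℝ) (n k : ℕ) (x : ℝ) : ℝ :=
  (a1 * x + a0) * bp (n - 1) k x + (a1 * (1 - x) + a0) * bpz (n - 1) ((k : ℤ) - 1) x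

/-- The modified Bernstein operator `B_n^{M,1}`. -/
noncomputable def BernM1 (a0 a1 : ℝ) (n : ℕ) (f : ℝ → ℝ) (x : ℝ) : ℝ :=
  ∑ k ∈ Finset.range (n + 1), bpM1 a0 a1 n k x * f (k / n)

/-- Second modified fundamental function `p_{n,k}^{M,2}`. -/
noncomputable def bpM2 (n k : ℕ) (x : ℝ) : ℝ :=
  ((n : ℝ) / 2 * x ^ 2 + (-1 - (n : ℝ) / 2) * x + 1) * bp (n - 2) k x
    + (n : ℝ) * x * (1 - x) * bpz (n - 2) ((k : ℤ) - 1) x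
    + ((n : ℝ) / 2 * x ^ 2 + (-(n : ℝ) / 2 + 1) * x) * bpz (n - 2) ((k : ℤ) - 2) x

/-- The second modified Bernstein operator `B_n^{M,2}`. -/
noncomputable def BernM2 (n : ℕ) (f : ℝ → ℝ) (x : ℝ) : ℝ :=
  ∑ k ∈ Finset.range (n + 1), bpM2 n k x * f (k / n)

/-- The Kantorovich operator `K_n`. -/
noncomputable def Kan (n : ℕ) (f : ℝ → ℝ) (x : ℝ) : ℝ :=
  ((n : ℝ) + 1) * ∑ k ∈ Finset.range (n + 1),
    bp n k x * ∫ t in ((k : ℝ) / (n + 1))..(((k : ℝ) + 1) / (n + 1)), f t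

/-- The modified Kantorovich operator `K_n^{M,1}`. -/
noncomputable def KanM1 (a0 a1 : ℝ) (n : ℕ) (f : ℝ → ℝ) (x : ℝ) : ℝ :=
  ((n : ℝ) + 1) * ∑ k ∈ Finset.range (n + 1),
    bpM1 a0 a1 n k x * ∫ t in ((k : ℝ) / (n + 1))..(((k : ℝ) + 1) / (n + 1)), f t

/-- The Durrmeyer operator `D_n`. -/
noncomputable def Dur (n : ℕ) (f : ℝ → ℝ) (x : ℝ) : ℝ :=
  ((n : ℝ) + 1) * ∑ k ∈ Finset.range (n + 1),
    bp n k x * ∫ t in (0:ℝ)..1, bp n k t * f t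

/-- The modified Durrmeyer operator `D_n^{M,1}`. -/
noncomputable def DurM1 (a0 a1 : ℝ) (n : ℕ) (f : ℝ → ℝ) (x : ℝ) : ℝ :=
  ((n : ℝ) + 1) * ∑ k ∈ Finset.range (n + 1),
    bpM1 a0 a1 n k x * ∫ t in (0:ℝ)..1, bp n k t * f t

/-- The genuine Bernstein–Durrmeyer operator `U_n`. -/
noncomputable def Gen (n : ℕ) (f : ℝ → ℝ) (x : ℝ) : ℝ :=
  (1 - x) ^ n * f 0 + x ^ n * f 1 +
    ((n : ℝ) - 1) * ∑ k ∈ Finset.Icc 1 (n - 1),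
      bp n k x * ∫ t in (0:ℝ)..1, bp (n - 2) (k - 1) t * f t

/-- The modified genuine Bernstein–Durrmeyer operator `U_n^{M,1}`. -/
noncomputable def GenM1 (a0 a1 : ℝ) (n : ℕ) (f : ℝ → ℝ) (x : ℝ) : ℝ :=
  (a1 * x + a0) * (1 - x) ^ (n - 1) * f 0 + (a1 * (1 - x) + a0) * x ^ (n - 1) * f 1 +
    ((n : ℝ) - 1) * ∑ k ∈ Finset.Icc 1 (n - 1),
      bpM1 a0 a1 n k x * ∫ t in (0:ℝ)..1, bp (n - 2) (k - 1) t * f t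

/-- First modulus of continuity on `[0,1]`. -/
noncomputable def omega1 (f : ℝ → ℝ) (δ : ℝ) : ℝ :=
  sSup {y | ∃ s t : ℝ, s ∈ Icc (0:ℝ) 1 ∧ t ∈ Icc (0:ℝ) 1 ∧ |s - t| ≤ δ ∧ y = |f s - f t|}

/-- Second modulus of smoothness on `[0,1]`. -/
noncomputable def omega2 (f : ℝ → ℝ) (δ : ℝ) : ℝ :=
  sSup {y | ∃ t h : ℝ, 0 < h ∧ h ≤ δ ∧ t - h ∈ Icc (0:ℝ) 1 ∧ t + h ∈ Icc (0:ℝ) 1 ∧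
    y = |f (t + h) - 2 * f t + f (t - h)|}

/-- Sup norm on `[0,1]`. -/
noncomputable def supNorm (g : ℝ → ℝ) : ℝ :=
  sSup {y | ∃ t ∈ Icc (0:ℝ) 1, y = |g t|}

open scoped Interval

lemma bpz_natCast (m j : ℕ) (x : ℝ) : bpz m (j : ℤ) x = bp m j x := by
  simp [bpz]

lemma bp_hasDerivAt (n k : ℕ) (hn : 1 ≤ n) (x : ℝ) :
    HasDerivAt (fun y => bp n k y)
      ((n:ℝ) * (bpz (n-1) ((k:ℤ)-1) x - bp (n-1) k x)) x := by
  have hs : n - 1 + 1 = n := by omega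
  have h1 : HasDerivAt (fun y : ℝ => y ^ k) ((k:ℝ) * x ^ (k-1)) x := hasDerivAt_pow k x
  have h2 : HasDerivAt (fun y : ℝ => (1 - y) ^ (n-k))
      (((n-k : ℕ):ℝ) * (1-x) ^ (n-k-1) * (-1)) x :=
    (hasDerivAt_pow (n-k) (1-x)).comp x ((hasDerivAt_id x).const_sub 1)
  have h3 := (h1.mul h2).const_mul ((n.choose k : ℝ))
  refine (h3.congr_of_eventuallyEq (Filter.EventuallyEq.of_eq ?_)).congr_deriv (Eq.symm ?_)
  · funext y; simp only [bp, Pi.mul_apply]; ring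
  rcases k with _ | j
  · simp only [bpz, bp]
    norm_num
  · rw [show ((Nat.succ j : ℕ):ℤ) - 1 = (j:ℤ) by push_cast; ring, bpz_natCast]
    have e1 : (n:ℝ) * ((n-1).choose j : ℝ) = (n.choose (j+1) : ℝ) * ((j:ℝ)+1) := by
      have h := Nat.add_one_mul_choose_eq (n-1) j
      rw [hs] at h
      exact_mod_cast h
    have e2 : (n:ℝ) * ((n-1).choose (j+1) : ℝ)
        = (n.choose (j+1) : ℝ) * ((n - (j+1) : ℕ):ℝ) := by
      have h := Nat.add_one_mul_choose_eq (n-1) (j+1)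
      rw [hs] at h
      have h2' := Nat.choose_succ_right_eq n (j+1)
      exact_mod_cast h.trans h2'
    have ex1 : (n-1) - j = n - (j+1) := by omega
    have ex2 : (n-1) - (j+1) = n - (j+1) - 1 := by omega
    have ex3 : (j+1) - 1 = j := by omega
    simp only [bp, Nat.succ_eq_add_one, ex1, ex2, ex3, Nat.cast_add, Nat.cast_one]
    linear_combination (x ^ j * (1-x) ^ (n - (j+1))) * e1
      - (x ^ (j+1) * (1-x) ^ (n - (j+1) - 1)) * e2

lemma bp_continuous (n k : ℕ) : Continuous (bp n k) := by
  unfold bp; continuity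

lemma bp_integrable (m k : ℕ) : IntervalIntegrable (bp m k) volume 0 1 :=
  (bp_continuous m k).intervalIntegrable 0 1

lemma bp_sum (n : ℕ) (x : ℝ) : ∑ k ∈ Finset.range (n+1), bp n k x = 1 := by
  have h := add_pow x (1-x) n
  simp only [add_sub_cancel, one_pow] at h
  rw [show ∑ k ∈ Finset.range (n+1), bp n k x
      = ∑ k ∈ Finset.range (n+1), x ^ k * (1-x) ^ (n-k) * (n.choose k : ℝ) from
    Finset.sum_congr rfl fun k _ => by unfold bp; ring]
  exact h.symm

lemma bp_deriv_succ (m j : ℕ) (t : ℝ) :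
    HasDerivAt (fun y => bp (m+1) (j+1) y)
      (((m:ℝ)+1) * (bp m j t - bp m (j+1) t)) t := by
  have h := bp_hasDerivAt (m+1) (j+1) (by omega) t
  have h1 : ((j+1 : ℕ):ℤ) - 1 = (j:ℤ) := by push_cast; ring
  rw [h1] at h
  simpa [bpz_natCast, Nat.add_sub_cancel] using h

lemma bp_zero_at_zero (m j : ℕ) : bp m (j+1) 0 = 0 := by simp [bp]

lemma bp_zero_at_one (m j : ℕ) (h : j < m) : bp m j 1 = 0 := by
  have : m - j ≠ 0 := by omega
  simp [bp, zero_pow this]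

lemma bp_step (m j : ℕ) (hj : j < m) :
    ∫ t in (0:ℝ)..1, bp m j t = ∫ t in (0:ℝ)..1, bp m (j+1) t := by
  have hint := intervalIntegral.integral_eq_sub_of_hasDerivAt
    (f := fun y => bp (m+1) (j+1) y)
    (f' := fun t => ((m:ℝ)+1) * (bp m j t - bp m (j+1) t))
    (a := 0) (b := 1)
    (fun t _ => bp_deriv_succ m j t)
    (((continuous_const.mul ((bp_continuous m j).sub
        (bp_continuous m (j+1))))).intervalIntegrable 0 1)
  rw [bp_zero_at_one (m+1) (j+1) (by omega), bp_zero_at_zero (m+1) j] at hint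
  rw [intervalIntegral.integral_const_mul,
    intervalIntegral.integral_sub (bp_integrable m j) (bp_integrable m (j+1))] at hint
  have hm : ((m:ℝ)+1) ≠ 0 := by positivity
  have := mul_eq_zero.mp (by linarith [hint] : ((m:ℝ)+1) *
    ((∫ t in (0:ℝ)..1, bp m j t) - ∫ t in (0:ℝ)..1, bp m (j+1) t) = 0)
  rcases this with h | h
  · exact absurd h hm
  · linarith

lemma bp_integral (m k : ℕ) (hk : k ≤ m) :
    ∫ t in (0:ℝ)..1, bp m k t = 1/((m:ℝ)+1) := by
  have hcon : ∀ j, j ≤ m → (∫ t in (0:ℝ)..1, bp m j t) = ∫ t in (0:ℝ)..1, bp m 0 t := by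
    intro j
    induction j with
    | zero => intro _; rfl
    | succ i ih => intro hj; rw [← bp_step m i (by omega)]; exact ih (by omega)
  have hsum : ∑ j ∈ Finset.range (m+1), ∫ t in (0:ℝ)..1, bp m j t = 1 := by
    rw [← intervalIntegral.integral_finset_sum (fun j _ => bp_integrable m j)]
    simp [bp_sum]
  rw [Finset.sum_congr rfl (fun j hj => hcon j (by
    simpa using Nat.lt_succ_iff.mp (Finset.mem_range.mp hj)))] at hsum
  rw [Finset.sum_const, Finset.card_range, nsmul_eq_mul] at hsum
  rw [hcon k hk]
  have hm : ((m:ℝ)+1) ≠ 0 := by positivity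
  field_simp at hsum ⊢
  push_cast at hsum; linarith

lemma bp_nonneg (n k : ℕ) {x : ℝ} (hx : x ∈ Icc (0:ℝ) 1) : 0 ≤ bp n k x := by
  have h1 := hx.1; have h2 := hx.2
  have h3 : (0:ℝ) ≤ 1 - x := by linarith
  unfold bp; positivity

/-- bound on the derivative of `D_n f`. -/
theorem stmt15 (n : ℕ) (hn : 1 ≤ n) (f f' : ℝ → ℝ)
    (hf : ∀ t ∈ Icc (0:ℝ) 1, HasDerivWithinAt f (f' t) (Icc 0 1) t)
    (hf' : ContinuousOn f' (Icc 0 1)) (x : ℝ) (hx : x ∈ Icc (0:ℝ) 1) :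
    |deriv (fun y => Dur n f y) x| ≤ (n : ℝ) / ((n : ℝ) + 2) * supNorm f' ∧
    (n : ℝ) / ((n : ℝ) + 2) * supNorm f' ≤ supNorm f' := by
  have huIcc : ([[(0:ℝ), 1]] : Set ℝ) = Icc 0 1 := uIcc_of_le zero_le_one
  obtain ⟨C, hC⟩ := (isCompact_Icc (a := (0:ℝ)) (b := 1)).exists_bound_of_continuousOn hf'
  have hbdd : BddAbove {y | ∃ t ∈ Icc (0:ℝ) 1, y = |f' t|} := by
    refine ⟨C, ?_⟩
    rintro y ⟨t, ht, rfl⟩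
    simpa using hC t ht
  have hMle : ∀ t ∈ Icc (0:ℝ) 1, |f' t| ≤ supNorm f' := fun t ht =>
    le_csSup hbdd ⟨t, ht, rfl⟩
  have hM0 : 0 ≤ supNorm f' :=
    le_trans (abs_nonneg (f' 0)) (hMle 0 ⟨le_refl 0, zero_le_one⟩)
  set M := supNorm f' with hMdef
  have hn2 : (0:ℝ) < (n:ℝ) + 2 := by positivity
  refine ⟨?_, ?_⟩
  swap
  · have h1 : (n:ℝ)/((n:ℝ)+2) ≤ 1 := by
      rw [div_le_one hn2]; linarith
    nlinarith
  set c : ℕ → ℝ := fun k => ∫ t in (0:ℝ)..1, bp n k t * f t with hc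
  have hfc : ContinuousOn f (Icc (0:ℝ) 1) := fun t ht => (hf t ht).continuousWithinAt
  -- derivative of Dur
  have hD : HasDerivAt (fun y => Dur n f y)
      (((n:ℝ)+1) * ∑ k ∈ Finset.range (n+1),
        ((n:ℝ) * (bpz (n-1) ((k:ℤ)-1) x - bp (n-1) k x)) * c k) x := by
    exact HasDerivAt.const_mul ((n:ℝ)+1)
      (HasDerivAt.fun_sum (fun k _ => (bp_hasDerivAt n k hn x).mul_const (c k)))
  -- rearrangement
  have hA : ∑ k ∈ Finset.range (n+1), bpz (n-1) ((k:ℤ)-1) x * c k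
      = ∑ k ∈ Finset.range n, bp (n-1) k x * c (k+1) := by
    rw [Finset.sum_range_succ']
    have h0 : bpz (n-1) (((0:ℕ):ℤ) - 1) x * c 0 = 0 := by
      norm_num [bpz]
    rw [h0, add_zero]
    exact Finset.sum_congr rfl fun i _ => by
      rw [show ((i+1:ℕ):ℤ) - 1 = (i:ℤ) by push_cast; ring, bpz_natCast]
  have hB : ∑ k ∈ Finset.range (n+1), bp (n-1) k x * c k
      = ∑ k ∈ Finset.range n, bp (n-1) k x * c k := by
    rw [Finset.sum_range_succ]
    have hz : bp (n-1) n x = 0 := by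
      simp [bp, Nat.choose_eq_zero_of_lt (by omega : n-1 < n)]
    rw [hz]; ring
  have hre : ∑ k ∈ Finset.range (n+1),
        ((n:ℝ) * (bpz (n-1) ((k:ℤ)-1) x - bp (n-1) k x)) * c k
      = (n:ℝ) * ∑ k ∈ Finset.range n, bp (n-1) k x * (c (k+1) - c k) := by
    calc ∑ k ∈ Finset.range (n+1), ((n:ℝ) * (bpz (n-1) ((k:ℤ)-1) x - bp (n-1) k x)) * c k
        = (n:ℝ) * (∑ k ∈ Finset.range (n+1), bpz (n-1) ((k:ℤ)-1) x * c k
            - ∑ k ∈ Finset.range (n+1), bp (n-1) k x * c k) := by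
          rw [← Finset.sum_sub_distrib, Finset.mul_sum]
          exact Finset.sum_congr rfl fun k _ => by ring
      _ = (n:ℝ) * ∑ k ∈ Finset.range n, bp (n-1) k x * (c (k+1) - c k) := by
          rw [hA, hB, ← Finset.sum_sub_distrib]
          congr 1
          exact Finset.sum_congr rfl fun k _ => by ring
  -- integration by parts
  have hkey : ∀ k, k < n → c (k+1) - c k
      = (1/((n:ℝ)+1)) * ∫ t in (0:ℝ)..1, bp (n+1) (k+1) t * f' t := by
    intro k hk
    have hu : ∀ t ∈ ([[(0:ℝ), 1]] : Set ℝ), HasDerivWithinAt (fun y => bp (n+1) (k+1) y)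
        (((n:ℝ)+1) * (bp n k t - bp n (k+1) t)) ([[(0:ℝ), 1]] : Set ℝ) t :=
      fun t _ => (bp_deriv_succ n k t).hasDerivWithinAt
    have hv : ∀ t ∈ ([[(0:ℝ), 1]] : Set ℝ), HasDerivWithinAt f (f' t) ([[(0:ℝ), 1]] : Set ℝ) t := by
      rw [huIcc]; exact hf
    have hu' : IntervalIntegrable (fun t => ((n:ℝ)+1) * (bp n k t - bp n (k+1) t)) volume 0 1 :=
      (continuous_const.mul ((bp_continuous n k).sub (bp_continuous n (k+1)))).intervalIntegrable 0 1
    have hv' : IntervalIntegrable f' volume 0 1 := by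
      apply ContinuousOn.intervalIntegrable; rw [huIcc]; exact hf'
    have hibp := intervalIntegral.integral_deriv_mul_eq_sub_of_hasDerivWithinAt hu hv hu' hv'
    rw [bp_zero_at_one (n+1) (k+1) (by omega), bp_zero_at_zero (n+1) k] at hibp
    have hi1 : IntervalIntegrable (fun t => (((n:ℝ)+1) * (bp n k t - bp n (k+1) t)) * f t) volume 0 1 := by
      apply ContinuousOn.intervalIntegrable
      rw [huIcc]
      exact ((continuous_const.mul ((bp_continuous n k).sub (bp_continuous n (k+1)))).continuousOn).mul hfc
    have hi2 : IntervalIntegrable (fun t => bp (n+1) (k+1) t * f' t) volume 0 1 := by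
      apply ContinuousOn.intervalIntegrable
      rw [huIcc]
      exact ((bp_continuous (n+1) (k+1)).continuousOn).mul hf'
    rw [intervalIntegral.integral_add hi1 hi2] at hibp
    have hbf1 : IntervalIntegrable (fun t => bp n k t * f t) volume 0 1 := by
      apply ContinuousOn.intervalIntegrable
      rw [huIcc]
      exact ((bp_continuous n k).continuousOn).mul hfc
    have hbf2 : IntervalIntegrable (fun t => bp n (k+1) t * f t) volume 0 1 := by
      apply ContinuousOn.intervalIntegrable
      rw [huIcc]
      exact ((bp_continuous n (k+1)).continuousOn).mul hfc
    have hsplit : ∫ t in (0:ℝ)..1, (((n:ℝ)+1) * (bp n k t - bp n (k+1) t)) * f t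
        = ((n:ℝ)+1) * (c k - c (k+1)) := by
      rw [intervalIntegral.integral_congr (g := fun t =>
        ((n:ℝ)+1) * (bp n k t * f t - bp n (k+1) t * f t)) (fun t _ => by ring)]
      rw [intervalIntegral.integral_const_mul, intervalIntegral.integral_sub hbf1 hbf2]
    rw [hsplit] at hibp
    have hn1 : ((n:ℝ)+1) ≠ 0 := by positivity
    field_simp
    linarith [hibp]
  -- bound on each difference
  have hbound : ∀ k, k < n → |c (k+1) - c k| ≤ 1/((n:ℝ)+1) * (M/((n:ℝ)+2)) := by
    intro k hk
    rw [hkey k hk, abs_mul, abs_of_nonneg (by positivity : (0:ℝ) ≤ 1/((n:ℝ)+1))]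
    have hi2 : IntervalIntegrable (fun t => bp (n+1) (k+1) t * f' t) volume 0 1 := by
      apply ContinuousOn.intervalIntegrable
      rw [huIcc]
      exact ((bp_continuous (n+1) (k+1)).continuousOn).mul hf'
    have habs : |∫ t in (0:ℝ)..1, bp (n+1) (k+1) t * f' t| ≤ M/((n:ℝ)+2) := by
      have h1 : |∫ t in (0:ℝ)..1, bp (n+1) (k+1) t * f' t|
          ≤ ∫ t in (0:ℝ)..1, |bp (n+1) (k+1) t * f' t| :=
        intervalIntegral.abs_integral_le_integral_abs zero_le_one
      have h2 : (∫ t in (0:ℝ)..1, |bp (n+1) (k+1) t * f' t|)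
          ≤ ∫ t in (0:ℝ)..1, bp (n+1) (k+1) t * M := by
        apply intervalIntegral.integral_mono_on zero_le_one hi2.abs
          (((bp_continuous (n+1) (k+1)).mul continuous_const).intervalIntegrable 0 1)
        intro t ht
        rw [abs_mul, abs_of_nonneg (bp_nonneg _ _ ht)]
        exact mul_le_mul_of_nonneg_left (hMle t ht) (bp_nonneg _ _ ht)
      have h3 : (∫ t in (0:ℝ)..1, bp (n+1) (k+1) t * M) = M/((n:ℝ)+2) := by
        rw [intervalIntegral.integral_mul_const, bp_integral (n+1) (k+1) (by omega)]
        push_cast; ring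
      linarith
    exact mul_le_mul_of_nonneg_left habs (by positivity)
  -- final assembly
  rw [hD.deriv, hre]
  have hT : |∑ k ∈ Finset.range n, bp (n-1) k x * (c (k+1) - c k)|
      ≤ 1/((n:ℝ)+1) * (M/((n:ℝ)+2)) := by
    calc |∑ k ∈ Finset.range n, bp (n-1) k x * (c (k+1) - c k)|
        ≤ ∑ k ∈ Finset.range n, |bp (n-1) k x * (c (k+1) - c k)| :=
          Finset.abs_sum_le_sum_abs _ _
      _ ≤ ∑ k ∈ Finset.range n, bp (n-1) k x * (1/((n:ℝ)+1) * (M/((n:ℝ)+2))) := by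
          apply Finset.sum_le_sum
          intro k hk
          rw [abs_mul, abs_of_nonneg (bp_nonneg _ _ hx)]
          exact mul_le_mul_of_nonneg_left (hbound k (Finset.mem_range.mp hk)) (bp_nonneg _ _ hx)
      _ = (∑ k ∈ Finset.range n, bp (n-1) k x) * (1/((n:ℝ)+1) * (M/((n:ℝ)+2))) :=
          (Finset.sum_mul _ _ _).symm
      _ = 1/((n:ℝ)+1) * (M/((n:ℝ)+2)) := by
          rw [show Finset.range n = Finset.range ((n-1)+1) by congr 1; omega, bp_sum]; ring
  rw [abs_mul, abs_mul, abs_of_nonneg (by positivity : (0:ℝ) ≤ (n:ℝ)+1),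
    abs_of_nonneg (by positivity : (0:ℝ) ≤ (n:ℝ))]
  calc ((n:ℝ)+1) * ((n:ℝ) * |∑ k ∈ Finset.range n, bp (n-1) k x * (c (k+1) - c k)|)
      ≤ ((n:ℝ)+1) * ((n:ℝ) * (1/((n:ℝ)+1) * (M/((n:ℝ)+2)))) := by
        apply mul_le_mul_of_nonneg_left (mul_le_mul_of_nonneg_left hT (by positivity)) (by positivity)
    _ = (n:ℝ)/((n:ℝ)+2) * M := by field_simp
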